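/- Suppose {v_j}_{j=1}^k is a frame in ℝ^n with lower frame bound A > 0. If ε ≤ √A/√k, then for every family {δ_j}_{j=1}^k of vectors in ℝ^n with ‖δ_j‖ < ε for all j, the family {v_j + δ_j}_{j=1}^k is a frame in ℝ^n. -/

import Mathlib

open scoped RealInnerProductSpace

theorem frame_stability {n k : ℕ} (v : Fin k → EuclideanSpace ℝ (Fin n)) (A : ℝ)
    (hA : 0 < A)
    (hlow : ∀ x : EuclideanSpace ℝ (Fin n), A * ‖x‖ ^ 2 ≤ ∑ j, ⟪x, v j⟫ ^ 2)
    (ε : ℝ) (hε : ε ≤ Real.sqrt A / Real.sqrt k)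
    (δ : Fin k → EuclideanSpace ℝ (Fin n)) (hδ : ∀ j, ‖δ j‖ < ε) :
    ∃ A' B' : ℝ, 0 < A' ∧ A' ≤ B' ∧
      ∀ x : EuclideanSpace ℝ (Fin n),
        A' * ‖x‖ ^ 2 ≤ ∑ j, ⟪x, v j + δ j⟫ ^ 2 ∧
        ∑ j, ⟪x, v j + δ j⟫ ^ 2 ≤ B' * ‖x‖ ^ 2 := by
  rcases Nat.eq_zero_or_pos k with hk | hk
  · subst hk
    refine ⟨1, 1, one_pos, le_refl 1, fun x => ?_⟩
    have h := hlow x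
    simp only [Finset.univ_eq_empty, Finset.sum_empty] at h ⊢
    have hx : ‖x‖ ^ 2 ≤ 0 := by nlinarith
    have hx0 : ‖x‖ ^ 2 = 0 := le_antisymm hx (by positivity)
    constructor <;> nlinarith
  · have hkne : (Finset.univ : Finset (Fin k)).Nonempty := by
      simpa [Finset.univ_nonempty_iff] using Fin.pos_iff_nonempty.mp hk
    set m : ℝ := Finset.univ.sup' hkne (fun j => ‖δ j‖) with hm_def
    have hm_le : ∀ j, ‖δ j‖ ≤ m := fun j => Finset.le_sup' (fun j => ‖δ j‖) (Finset.mem_univ j)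
    have hm_lt : m < ε := by
      apply Finset.sup'_lt_iff hkne |>.mpr
      intro j _; exact hδ j
    have hm0 : 0 ≤ m := le_trans (norm_nonneg _) (hm_le ⟨0, hk⟩)
    have hsqk : (0:ℝ) < Real.sqrt k := Real.sqrt_pos.mpr (by exact_mod_cast hk)
    have hsqA : (0:ℝ) < Real.sqrt A := Real.sqrt_pos.mpr hA
    have hc : 0 < Real.sqrt A - Real.sqrt k * m := by
      have : Real.sqrt k * m < Real.sqrt k * ε := by
        exact mul_lt_mul_of_pos_left hm_lt hsqk
      have h2 : Real.sqrt k * ε ≤ Real.sqrt A := by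
        rw [mul_comm]
        calc ε * Real.sqrt k ≤ (Real.sqrt A / Real.sqrt k) * Real.sqrt k :=
              mul_le_mul_of_nonneg_right hε hsqk.le
          _ = Real.sqrt A := div_mul_cancel₀ _ hsqk.ne'
      linarith
    set c : ℝ := Real.sqrt A - Real.sqrt k * m with hc_def
    refine ⟨c ^ 2, max (c ^ 2) (∑ j, ‖v j + δ j‖ ^ 2), by positivity, le_max_left _ _,
      fun x => ?_⟩
    constructor
    · -- lower bound
      set F : EuclideanSpace ℝ (Fin k) := WithLp.toLp 2 (fun j => ⟪x, v j + δ j⟫) with hF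
      set G : EuclideanSpace ℝ (Fin k) := WithLp.toLp 2 (fun j => ⟪x, v j⟫) with hG
      have normF : ‖F‖ ^ 2 = ∑ j, ⟪x, v j + δ j⟫ ^ 2 := by
        rw [EuclideanSpace.norm_eq, Real.sq_sqrt (by positivity)]
        simp [hF, Real.norm_eq_abs, sq_abs]
      have normG2 : ‖G‖ ^ 2 = ∑ j, ⟪x, v j⟫ ^ 2 := by
        rw [EuclideanSpace.norm_eq, Real.sq_sqrt (by positivity)]
        simp [hG, Real.norm_eq_abs, sq_abs]
      have normG : Real.sqrt A * ‖x‖ ≤ ‖G‖ := by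
        have h1 : A * ‖x‖ ^ 2 ≤ ‖G‖ ^ 2 := normG2 ▸ hlow x
        have := Real.sqrt_le_sqrt h1
        rwa [Real.sqrt_mul hA.le, Real.sqrt_sq (norm_nonneg x),
          Real.sqrt_sq (norm_nonneg G)] at this
      have normD : ‖G - F‖ ≤ Real.sqrt k * m * ‖x‖ := by
        have h1 : ‖G - F‖ ^ 2 ≤ (Real.sqrt k * m * ‖x‖) ^ 2 := by
          rw [EuclideanSpace.norm_eq, Real.sq_sqrt (by positivity)]
          have heach : ∀ j : Fin k, ‖(G - F) j‖ ^ 2 ≤ (m * ‖x‖) ^ 2 := by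
            intro j
            have : (G - F) j = ⟪x, v j⟫ - ⟪x, v j + δ j⟫ := rfl
            rw [this, inner_add_right]
            have hval : ⟪x, v j⟫ - (⟪x, v j⟫ + ⟪x, δ j⟫) = -⟪x, δ j⟫ := by ring
            rw [hval, norm_neg, Real.norm_eq_abs, sq_abs]
            have habs : |⟪x, δ j⟫| ≤ ‖x‖ * ‖δ j‖ := abs_real_inner_le_norm x (δ j)
            have h2 : ‖x‖ * ‖δ j‖ ≤ m * ‖x‖ := by
              rw [mul_comm]
              exact mul_le_mul_of_nonneg_right (hm_le j) (norm_nonneg x)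
            have h3 : ⟪x, δ j⟫ ^ 2 ≤ (m * ‖x‖) ^ 2 := by
              rw [← sq_abs]
              apply pow_le_pow_left₀ (abs_nonneg _) (le_trans habs h2)
            exact h3
          calc ∑ j, ‖(G - F) j‖ ^ 2 ≤ ∑ _j : Fin k, (m * ‖x‖) ^ 2 :=
                Finset.sum_le_sum (fun j _ => heach j)
            _ = k * (m * ‖x‖) ^ 2 := by simp [Finset.sum_const, nsmul_eq_mul]
            _ = (Real.sqrt k * m * ‖x‖) ^ 2 := by
                have hs : (Real.sqrt k) ^ 2 = (k:ℝ) := Real.sq_sqrt (Nat.cast_nonneg k)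
                nlinarith [hs]
        have := Real.sqrt_le_sqrt h1
        rwa [Real.sqrt_sq (norm_nonneg _), Real.sqrt_sq (by positivity)] at this
      have hF_ge : c * ‖x‖ ≤ ‖F‖ := by
        have tri : ‖G‖ ≤ ‖F‖ + ‖G - F‖ := by
          calc ‖G‖ = ‖F + (G - F)‖ := by congr 1; abel
            _ ≤ ‖F‖ + ‖G - F‖ := norm_add_le _ _
        have : Real.sqrt A * ‖x‖ - Real.sqrt k * m * ‖x‖ ≤ ‖F‖ := by linarith
        calc c * ‖x‖ = Real.sqrt A * ‖x‖ - Real.sqrt k * m * ‖x‖ := by rw [hc_def]; ring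
          _ ≤ ‖F‖ := this
      have : (c * ‖x‖) ^ 2 ≤ ‖F‖ ^ 2 := by
        apply pow_le_pow_left₀ (by positivity) hF_ge
      rw [normF] at this
      calc c ^ 2 * ‖x‖ ^ 2 = (c * ‖x‖) ^ 2 := by ring
        _ ≤ _ := this
    · -- upper bound
      calc ∑ j, ⟪x, v j + δ j⟫ ^ 2 ≤ ∑ j, ‖v j + δ j‖ ^ 2 * ‖x‖ ^ 2 := by
            apply Finset.sum_le_sum
            intro j _
            have habs : |⟪x, v j + δ j⟫| ≤ ‖x‖ * ‖v j + δ j‖ :=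
              abs_real_inner_le_norm x _
            have := pow_le_pow_left₀ (abs_nonneg _) habs 2
            rw [sq_abs] at this
            calc ⟪x, v j + δ j⟫ ^ 2 ≤ (‖x‖ * ‖v j + δ j‖) ^ 2 := this
              _ = ‖v j + δ j‖ ^ 2 * ‖x‖ ^ 2 := by ring
        _ = (∑ j, ‖v j + δ j‖ ^ 2) * ‖x‖ ^ 2 := by rw [← Finset.sum_mul]
        _ ≤ max (c ^ 2) (∑ j, ‖v j + δ j‖ ^ 2) * ‖x‖ ^ 2 :=
            mul_le_mul_of_nonneg_right (le_max_right _ _) (by positivity)
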